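/- Let $T$ be a tree rooted at $r$ with an Euler tour starting at $r$. For each non-root vertex $v$, let $PN(v)$ be the number of forward (parent-to-child) edges in the tour at positions up to and including the forward edge entering $v$, and let $PN(r) = 0$. Then $PN$ is a preorder numbering of $T$: $PN$ is a bijection from $V(T)$ to $\{0, 1, \ldots, n-1\}$, $PN(u) < PN(v)$ whenever $u$ is a proper ancestor of $v$, and the vertices of the subtree rooted at $v$ receive exactly the numbers $\{PN(v), PN(v)+1, \ldots, PN(v) + \mathrm{Size}(v) - 1\}$, where $\mathrm{Size}(v)$ is the number of vertices in $v$'s subtree. -/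

import Mathlib

/-- In a rooted forest given by parent map `p` with every vertex reaching the
root `r`, there are no nontrivial cycles away from the root. -/
theorem et_no_cycle {V : Type*} {r : V} {p : V → V} (hr : p r = r)
    (hroot : ∀ v, ∃ k, p^[k] v = r) :
    ∀ (v : V), v ≠ r → ∀ (k : ℕ), 0 < k → p^[k] v ≠ v := by
  classical
  have hspec : ∀ v, p^[Nat.find (hroot v)] v = r := fun v => Nat.find_spec (hroot v)
  set dep : V → ℕ := fun v => Nat.find (hroot v) with hdep
  have hstep : ∀ v, v ≠ r → dep v = dep (p v) + 1 := by
    intro v hv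
    have h1 : dep v ≠ 0 := by
      intro h0
      have h := hspec v
      rw [show Nat.find (hroot v) = dep v from rfl, h0] at h
      exact hv h
    obtain ⟨m, hm⟩ := Nat.exists_eq_succ_of_ne_zero h1
    have h2 : p^[m] (p v) = r := by
      have h := hspec v
      rw [show Nat.find (hroot v) = dep v from rfl, hm, Function.iterate_succ_apply] at h
      exact h
    have le1 : dep (p v) ≤ m := Nat.find_le h2
    have le2 : dep v ≤ dep (p v) + 1 := by
      apply Nat.find_le
      rw [Function.iterate_succ_apply]
      exact hspec (p v)
    omega
  have key : ∀ (k : ℕ) (u : V), p^[k] u ≠ r → dep u = dep (p^[k] u) + k := by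
    intro k
    induction k with
    | zero => simp
    | succ k ih =>
      intro u hu
      have hu' : u ≠ r := by
        intro h; subst h; exact hu (Function.iterate_fixed hr _)
      have h2 : p^[k] (p u) ≠ r := by rwa [← Function.iterate_succ_apply]
      have h3 := ih (p u) h2
      rw [hstep u hu', h3, Function.iterate_succ_apply]
      omega
  intro v hv k hk hcyc
  have h1 : p^[k] v ≠ r := by rw [hcyc]; exact hv
  have h2 := key k v h1
  rw [hcyc] at h2
  omega

/-- An element occurring exactly once in a list occurs only at its `indexOf`. -/
theorem count_one_unique {α : Type*} [DecidableEq α] {l : List α} {x : α}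
    (hc : l.count x = 1) {i : ℕ} (hi : i < l.length) (hx : l[i] = x) :
    i = l.idxOf x := by
  by_contra hne
  have hmem : x ∈ l := List.count_pos_iff.mp (by omega)
  have hidx : l.idxOf x < l.length := List.idxOf_lt_length_iff.mpr hmem
  have hgi : l.get ⟨l.idxOf x, hidx⟩ = x := List.getElem_idxOf hidx
  have hdup : l.Duplicate x := by
    rw [List.duplicate_iff_exists_distinct_get]
    rcases lt_or_gt_of_ne hne with h | h
    · exact ⟨⟨i, hi⟩, ⟨l.idxOf x, hidx⟩, h, hx.symm, hgi.symm⟩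
    · exact ⟨⟨l.idxOf x, hidx⟩, ⟨i, hi⟩, h, hgi.symm, hx.symm⟩
  have := List.duplicate_iff_two_le_count.mp hdup
  omega

section EulerDefs

variable {V : Type*} [DecidableEq V]

/-- The `i`-th edge of the tour (default `(r,r)`). -/
def etD (r : V) (tour : List (V × V)) (i : ℕ) : V × V := tour.getD i (r, r)

/-- The vertex reached after `i` steps of the tour. -/
def etW (r : V) (tour : List (V × V)) : ℕ → V
  | 0 => r
  | (i + 1) => (etD r tour i).2

/-- Position `i` of the tour carries a forward edge. -/
def etP (p : V → V) (r : V) (tour : List (V × V)) (i : ℕ) : Prop :=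
  p (etD r tour i).2 = (etD r tour i).1

instance etP.decidable (p : V → V) (r : V) (tour : List (V × V)) :
    DecidablePred (etP p r tour) := fun i => by unfold etP; infer_instance

/-- Number of forward edges among the first `i` positions. -/
def etF (p : V → V) (r : V) (tour : List (V × V)) (i : ℕ) : ℕ :=
  ∑ j ∈ Finset.range i, if etP p r tour j then 1 else 0

end EulerDefs

/-- Euler-tour preorder numbering. With the rooted tree and Euler tour as in
the subtree-size lemma, let `PN v` be the number of forward (parent-to-child)
edges at positions up to and including the forward edge entering `v`, and
`PN r = 0`. Then `PN` is a preorder numbering: it is a bijection onto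
`{0, …, n-1}`, proper ancestors get smaller numbers, and the subtree of `v`
receives exactly the numbers `{PN v, …, PN v + Size v - 1}`. -/
theorem euler_tour_preorder_numbering {V : Type*} [Fintype V] [DecidableEq V]
    (r : V) (p : V → V) (hr : p r = r) (hroot : ∀ v, ∃ k, p^[k] v = r)
    (tour : List (V × V)) (hne : tour ≠ [])
    (hstart : (tour.head hne).1 = r) (hend : (tour.getLast hne).2 = r)
    (hchain : List.Chain' (fun e f => e.2 = f.1) tour)
    (hedges : ∀ e ∈ tour, (p e.2 = e.1 ∧ e.2 ≠ r) ∨ (p e.1 = e.2 ∧ e.1 ≠ r))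
    (hcount : ∀ v : V, v ≠ r →
      tour.count (p v, v) = 1 ∧ tour.count (v, p v) = 1)
    (PN : V → ℕ)
    (hPNr : PN r = 0)
    (hPN : ∀ v : V, v ≠ r →
      PN v = ((tour.take (List.idxOf (p v, v) tour + 1)).filter
        (fun e => decide (p e.2 = e.1))).length) :
    Function.Injective PN ∧
    Set.range PN = Set.Iio (Fintype.card V) ∧
    (∀ u v : V, u ≠ v → (∃ k, 0 < k ∧ p^[k] v = u) → PN u < PN v) ∧
    (∀ v : V, PN '' {u | ∃ k, p^[k] u = v}
      = Set.Icc (PN v) (PN v + Nat.card {u | ∃ k, p^[k] u = v} - 1)) := by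
  classical
  have hbeq : (instBEqProd : BEq (V × V)) = instBEqOfDecidableEq := by
    have h1 : @LawfulBEq (V × V) instBEqProd := by
      constructor
      · intro a b h
        cases a; cases b
        simpa [instBEqProd, BEq.beq, Prod.ext_iff] using h
    have h2 : @LawfulBEq (V × V) instBEqOfDecidableEq := @instLawfulBEq (V × V) _
    exact @lawful_beq_subsingleton _ _ _ h1 h2
  haveI hlbeq : @LawfulBEq (V × V) instBEqProd := by rw [hbeq]; exact @instLawfulBEq (V × V) _
  have hIeq : ∀ x : V × V,
      @List.idxOf _ instBEqProd x tour = @List.idxOf _ instBEqOfDecidableEq x tour :=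
    fun x => by rw [hbeq]
  have hnocyc : ∀ (v : V), v ≠ r → ∀ (k : ℕ), 0 < k → p^[k] v ≠ v :=
    et_no_cycle hr hroot
  have hlen0 : 0 < tour.length := List.length_pos_iff.mpr hne
  have hn0 : 0 < Fintype.card V := Fintype.card_pos_iff.mpr ⟨r⟩
  -- basic facts about etD / etW
  have hd_get : ∀ (i : ℕ) (h : i < tour.length), etD r tour i = tour[i] :=
    fun i h => List.getD_eq_getElem tour (r, r) h
  have hdmem : ∀ (i : ℕ), i < tour.length → etD r tour i ∈ tour := by
    intro i h
    rw [hd_get i h]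
    exact List.getElem_mem h
  have hws : ∀ i : ℕ, etW r tour (i + 1) = (etD r tour i).2 := fun i => rfl
  have hw1 : ∀ (i : ℕ), i < tour.length → (etD r tour i).1 = etW r tour i := by
    intro i h
    cases i with
    | zero =>
      show (etD r tour 0).1 = r
      rw [hd_get 0 hlen0, List.getElem_zero hlen0]
      exact hstart
    | succ j =>
      have hj : j < tour.length - 1 := by omega
      have hc := List.isChain_iff_getElem.mp hchain j (by omega)
      have hc' : (tour[j]'(by omega)).2 = (tour[j+1]'h).1 := hc
      rw [hws j, hd_get (j+1) h, hd_get j (by omega)]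
      exact hc'.symm
  have hwlen : etW r tour tour.length = r := by
    have hl : tour.length = (tour.length - 1) + 1 := by omega
    rw [hl, hws]
    have h := List.getLast_eq_getElem hne
    rw [hd_get (tour.length - 1) (by omega), ← h]
    exact hend
  -- forward edges do not enter the root
  have hfwd_ne_r : ∀ e ∈ tour, p e.2 = e.1 → e.2 ≠ r := by
    intro e he hf h2
    rcases hedges e he with ⟨_, h⟩ | ⟨h', h⟩
    · exact h h2
    · apply h; rw [← hf, h2, hr]
  -- the parent of v is not in the subtree of v (v ≠ r)
  have hpv_not : ∀ v : V, v ≠ r → ¬ ∃ k, p^[k] (p v) = v := by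
    rintro v hv ⟨k, hk⟩
    exact hnocyc v hv (k+1) (Nat.succ_pos k) (by rw [Function.iterate_succ_apply]; exact hk)
  -- r belongs only to the subtree of r
  have hsub_r : ∀ v : V, (∃ k, p^[k] r = v) → v = r := by
    rintro v ⟨k, hk⟩
    rw [Function.iterate_fixed hr k] at hk
    exact hk.symm
  -- index facts
  have hmemE : ∀ v : V, v ≠ r → (p v, v) ∈ tour := by
    intro v hv
    have := (hcount v hv).1
    exact List.count_pos_iff.mp (by omega)
  have hmemX : ∀ v : V, v ≠ r → (v, p v) ∈ tour := by
    intro v hv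
    have := (hcount v hv).2
    exact List.count_pos_iff.mp (by omega)
  have hidx_lt : ∀ x : V × V, x ∈ tour → List.idxOf x tour < tour.length := by
    intro x hx
    exact List.idxOf_lt_length_iff.mpr hx
  have hd_idx : ∀ (x : V × V), x ∈ tour → etD r tour (List.idxOf x tour) = x := by
    intro x hx
    rw [hd_get _ (List.idxOf_lt_length_iff.mpr hx)]
    exact List.getElem_idxOf (List.idxOf_lt_length_iff.mpr hx)
  have huniq : ∀ (x : V × V), tour.count x = 1 → ∀ (i : ℕ), i < tour.length →
      etD r tour i = x → i = List.idxOf x tour := by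
    intro x hc i h hd
    rw [hIeq x]
    refine count_one_unique ?_ h ?_
    · rw [← hbeq]; exact hc
    · rw [← hd_get i h]; exact hd
  have hElt : ∀ v : V, v ≠ r → List.idxOf (p v, v) tour < tour.length :=
    fun v hv => hidx_lt _ (hmemE v hv)
  have hXlt : ∀ v : V, v ≠ r → List.idxOf (v, p v) tour < tour.length :=
    fun v hv => hidx_lt _ (hmemX v hv)
  have hdE : ∀ (v : V), v ≠ r → etD r tour (List.idxOf (p v, v) tour) = (p v, v) :=
    fun v hv => hd_idx _ (hmemE v hv)
  have hdX : ∀ (v : V), v ≠ r → etD r tour (List.idxOf (v, p v) tour) = (v, p v) :=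
    fun v hv => hd_idx _ (hmemX v hv)
  have hE_inj : ∀ u v : V, u ≠ r → v ≠ r →
      List.idxOf (p u, u) tour = List.idxOf (p v, v) tour → u = v := by
    intro u v hu hv h
    have h1 := hdE u hu
    rw [h] at h1
    rw [hdE v hv] at h1
    exact (congrArg Prod.snd h1).symm
  -- ***** The main structural lemma: the walk is inside the subtree of v
  -- exactly strictly after the entering edge and up to the exiting edge. *****
  have hA : ∀ (v : V), v ≠ r → ∀ i : ℕ, i ≤ tour.length →
      ((∃ k, p^[k] (etW r tour i) = v) ↔
        (List.idxOf (p v, v) tour < i ∧ i ≤ List.idxOf (v, p v) tour)) := by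
    intro v hv i
    induction i using Nat.strongRecOn with
    | ind i IH =>
    cases i with
    | zero =>
      intro _
      constructor
      · rintro ⟨k, hk⟩
        exact absurd (hsub_r v ⟨k, hk⟩) hv
      · rintro ⟨h1, _⟩
        omega
    | succ j =>
      intro hi
      have hjlen : j < tour.length := by omega
      have hIH := IH j (by omega) (by omega)
      have ha1 : (etD r tour j).1 = etW r tour j := hw1 j hjlen
      have hedge := hedges (etD r tour j) (hdmem j hjlen)
      constructor
      · intro hbS
        by_cases haS : ∃ k, p^[k] (etW r tour j) = v
        · obtain ⟨h1, h2⟩ := hIH.mp haS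
          refine ⟨by omega, ?_⟩
          rcases eq_or_ne j (List.idxOf (v, p v) tour) with hjX | hjX
          · exfalso
            have hdj : etD r tour j = (v, p v) := by rw [hjX]; exact hdX v hv
            apply hpv_not v hv
            rw [hws j, hdj] at hbS
            exact hbS
          · omega
        · -- entering the subtree: the edge must be (p v, v)
          have hpb : p ((etD r tour j).2) = (etD r tour j).1 := by
            rcases hedge with ⟨h, _⟩ | ⟨h, _⟩
            · exact h
            · exfalso
              apply haS
              obtain ⟨k, hk⟩ := hbS
              rw [hws j] at hk
              refine ⟨k + 1, ?_⟩
              rw [← ha1, Function.iterate_succ_apply, h]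
              exact hk
          have hb_eq_v : (etD r tour j).2 = v := by
            by_contra hbv
            apply haS
            obtain ⟨k, hk⟩ := hbS
            rw [hws j] at hk
            cases k with
            | zero => exact absurd hk hbv
            | succ m =>
              rw [Function.iterate_succ_apply, hpb, ha1] at hk
              exact ⟨m, hk⟩
          have hdj : etD r tour j = (p v, v) := by
            rw [Prod.ext_iff]
            refine ⟨?_, hb_eq_v⟩
            rw [← hpb, hb_eq_v]
          have hjE : j = List.idxOf (p v, v) tour :=
            huniq _ (hcount v hv).1 j hjlen hdj
          refine ⟨by omega, ?_⟩
          by_contra hlt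
          push_neg at hlt
          have hXl := hXlt v hv
          have hwX : etW r tour (List.idxOf (v, p v) tour) = v := by
            rw [← hw1 _ hXl, hdX v hv]
          have := (IH (List.idxOf (v, p v) tour) (by omega) (by omega)).mp
            ⟨0, by rw [hwX]; rfl⟩
          omega
      · rintro ⟨h1, h2⟩
        by_cases haS : ∃ k, p^[k] (etW r tour j) = v
        · obtain ⟨g1, g2⟩ := hIH.mp haS
          by_contra hbS
          have hpa : p ((etD r tour j).1) = (etD r tour j).2 := by
            rcases hedge with ⟨h, _⟩ | ⟨h, _⟩
            · exfalso
              apply hbS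
              obtain ⟨k, hk⟩ := haS
              refine ⟨k + 1, ?_⟩
              rw [hws j, Function.iterate_succ_apply, h, ha1]
              exact hk
            · exact h
          have ha_eq_v : (etD r tour j).1 = v := by
            by_contra hav
            apply hbS
            obtain ⟨k, hk⟩ := haS
            rw [← ha1] at hk
            cases k with
            | zero => exact absurd hk hav
            | succ m =>
              rw [Function.iterate_succ_apply, hpa] at hk
              exact ⟨m, by rw [hws j]; exact hk⟩
          have hdj : etD r tour j = (v, p v) := by
            rw [Prod.ext_iff]
            exact ⟨ha_eq_v, by rw [← hpa, ha_eq_v]⟩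
          have hjX : j = List.idxOf (v, p v) tour :=
            huniq _ (hcount v hv).2 j hjlen hdj
          omega
        · have hnot : ¬(List.idxOf (p v, v) tour < j ∧
              j ≤ List.idxOf (v, p v) tour) := fun hc => haS (hIH.mpr hc)
          have hEj : List.idxOf (p v, v) tour = j := by omega
          refine ⟨0, ?_⟩
          rw [hws j, ← hEj, hdE v hv]
          rfl
  -- entry precedes exit
  have hEX : ∀ v : V, v ≠ r →
      List.idxOf (p v, v) tour < List.idxOf (v, p v) tour := by
    intro v hv
    have hwX : etW r tour (List.idxOf (v, p v) tour) = v := by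
      rw [← hw1 _ (hXlt v hv), hdX v hv]
    have hm := (hA v hv _ (le_of_lt (hXlt v hv))).mp ⟨0, by rw [hwX]; rfl⟩
    exact hm.1
  -- counting forward edges
  have hFmono : ∀ i j : ℕ, i ≤ j → etF p r tour i ≤ etF p r tour j := by
    intro i j hij
    apply Finset.sum_le_sum_of_subset (Finset.range_subset_range.mpr hij)
  have hFsucc : ∀ i : ℕ,
      etF p r tour (i + 1) = etF p r tour i + (if etP p r tour i then 1 else 0) :=
    fun i => Finset.sum_range_succ _ i
  have hPE : ∀ v : V, v ≠ r → etP p r tour (List.idxOf (p v, v) tour) := by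
    intro v hv
    unfold etP
    rw [hdE v hv]
  have hbridge : ∀ i : ℕ, i ≤ tour.length →
      ((tour.take i).filter (fun e => decide (p e.2 = e.1))).length = etF p r tour i := by
    intro i
    induction i with
    | zero => intro _; simp [etF]
    | succ i ih =>
      intro hi
      have hilen : i < tour.length := by omega
      rw [List.take_succ, List.filter_append, List.length_append, ih (by omega), hFsucc]
      congr 1
      rw [List.getElem?_eq_getElem hilen]
      have hPiff : etP p r tour i ↔ p (tour[i]).2 = (tour[i]).1 := by
        unfold etP
        rw [hd_get i hilen]
      by_cases hP : etP p r tour i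
      · rw [if_pos hP]
        have := hPiff.mp hP
        simp [List.filter_singleton, this]
      · rw [if_neg hP]
        have : ¬ p (tour[i]).2 = (tour[i]).1 := fun h => hP (hPiff.mpr h)
        simp [List.filter_singleton, this]
  have hPNF : ∀ v : V, v ≠ r →
      PN v = etF p r tour (List.idxOf (p v, v) tour) + 1 := by
    intro v hv
    rw [hPN v hv, hbridge _ (by have := hElt v hv; omega), hFsucc, if_pos (hPE v hv)]
  have hstrict : ∀ u v : V, u ≠ r → v ≠ r →
      List.idxOf (p u, u) tour < List.idxOf (p v, v) tour → PN u < PN v := by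
    intro u v hu hv h
    rw [hPNF u hu, hPNF v hv]
    have h1 := hFmono (List.idxOf (p u, u) tour + 1) (List.idxOf (p v, v) tour) (by omega)
    have h2 : etF p r tour (List.idxOf (p u, u) tour + 1)
        = etF p r tour (List.idxOf (p u, u) tour) + 1 := by
      rw [hFsucc, if_pos (hPE u hu)]
    omega
  have hPN1 : ∀ v : V, v ≠ r → 1 ≤ PN v := by
    intro v hv
    rw [hPNF v hv]
    omega
  -- injectivity
  have hinj : Function.Injective PN := by
    intro u v h
    by_cases hu : u = r <;> by_cases hv : v = r
    · rw [hu, hv]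
    · exfalso; rw [hu, hPNr] at h; have := hPN1 v hv; omega
    · exfalso; rw [hv, hPNr] at h; have := hPN1 u hu; omega
    · rcases lt_trichotomy (List.idxOf (p u, u) tour) (List.idxOf (p v, v) tour)
        with hlt | heq | hgt
      · exact absurd h (by have := hstrict u v hu hv hlt; omega)
      · exact hE_inj u v hu hv heq
      · exact absurd h (by have := hstrict v u hv hu hgt; omega)
  -- forward positions correspond to non-root vertices
  have hfwd_pos : ∀ i : ℕ, i < tour.length → etP p r tour i →
      ((etD r tour i).2 ≠ r ∧
        i = List.idxOf (p ((etD r tour i).2), (etD r tour i).2) tour) := by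
    intro i hi hP
    have hPi : p (etD r tour i).2 = (etD r tour i).1 := hP
    have hner : (etD r tour i).2 ≠ r := hfwd_ne_r _ (hdmem i hi) hPi
    refine ⟨hner, ?_⟩
    apply huniq _ (hcount _ hner).1 i hi
    rw [Prod.ext_iff]
    exact ⟨hPi.symm, rfl⟩
  have hFcard : ∀ i : ℕ,
      etF p r tour i = ((Finset.range i).filter (etP p r tour)).card :=
    fun i => (Finset.card_filter _ _).symm
  have hFlen : etF p r tour tour.length = Fintype.card V - 1 := by
    rw [hFcard]
    have hcard : ((Finset.range tour.length).filter (etP p r tour)).card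
        = (Finset.univ.erase r).card := by
      apply Finset.card_bij (fun i _ => (etD r tour i).2)
      · intro i hi
        simp only [Finset.mem_filter, Finset.mem_range] at hi
        exact Finset.mem_erase.mpr ⟨(hfwd_pos i hi.1 hi.2).1, Finset.mem_univ _⟩
      · intro i hi j hj hij
        simp only [Finset.mem_filter, Finset.mem_range] at hi hj
        have h1 := (hfwd_pos i hi.1 hi.2).2
        have h2 := (hfwd_pos j hj.1 hj.2).2
        rw [hij, ← h2] at h1
        exact h1
      · intro b hb
        rw [Finset.mem_erase] at hb
        refine ⟨List.idxOf (p b, b) tour, ?_, ?_⟩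
        · simp only [Finset.mem_filter, Finset.mem_range]
          exact ⟨hElt b hb.1, hPE b hb.1⟩
        · rw [hdE b hb.1]
    rw [hcard, Finset.card_erase_of_mem (Finset.mem_univ r), Finset.card_univ]
  -- range of PN
  have hPNlt : ∀ v : V, PN v < Fintype.card V := by
    intro v
    by_cases hv : v = r
    · rw [hv, hPNr]; omega
    · have h1 := hPNF v hv
      have h2 : etF p r tour (List.idxOf (p v, v) tour + 1) ≤ etF p r tour tour.length :=
        hFmono _ _ (by have := hElt v hv; omega)
      have h3 : etF p r tour (List.idxOf (p v, v) tour + 1)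
          = etF p r tour (List.idxOf (p v, v) tour) + 1 := by
        rw [hFsucc, if_pos (hPE v hv)]
      rw [hFlen] at h2
      omega
  have himg : Finset.image PN Finset.univ = Finset.range (Fintype.card V) := by
    apply Finset.eq_of_subset_of_card_le
    · intro x hx
      rw [Finset.mem_image] at hx
      obtain ⟨v, _, hv⟩ := hx
      rw [Finset.mem_range, ← hv]
      exact hPNlt v
    · rw [Finset.card_range, Finset.card_image_of_injective _ hinj, Finset.card_univ]
  have hrange : Set.range PN = Set.Iio (Fintype.card V) := by
    ext x
    have h := Finset.ext_iff.mp himg x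
    simp only [Finset.mem_image, Finset.mem_univ, true_and, Finset.mem_range] at h
    simp only [Set.mem_range, Set.mem_Iio]
    exact h
  -- ancestors receive smaller numbers
  have hanc : ∀ u v : V, u ≠ v → (∃ k, 0 < k ∧ p^[k] v = u) → PN u < PN v := by
    rintro u v huv ⟨k, hk, hpk⟩
    have hvr : v ≠ r := by
      intro h
      subst h
      apply huv
      rw [← hpk, Function.iterate_fixed hr k]
    by_cases hur : u = r
    · rw [hur, hPNr]
      have := hPN1 v hvr
      omega
    · have hwE : etW r tour (List.idxOf (p v, v) tour + 1) = v := by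
        rw [hws, hdE v hvr]
      have hm := (hA u hur (List.idxOf (p v, v) tour + 1)
        (by have := hElt v hvr; omega)).mp ⟨k, by rw [hwE]; exact hpk⟩
      have h1 := hm.1
      have hne2 : List.idxOf (p u, u) tour ≠ List.idxOf (p v, v) tour :=
        fun h => huv (hE_inj u v hur hvr h)
      exact hstrict u v hur hvr (by omega)
  -- the subtree interval property
  have hsub : ∀ v : V, PN '' {u | ∃ k, p^[k] u = v}
      = Set.Icc (PN v) (PN v + Nat.card {u | ∃ k, p^[k] u = v} - 1) := by
    intro v
    by_cases hv : v = r
    · rw [hv]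
      have huniv : {u : V | ∃ k, p^[k] u = r} = Set.univ := Set.eq_univ_iff_forall.mpr hroot
      rw [huniv, Set.image_univ, hrange, hPNr]
      have hc : Nat.card (Set.univ : Set V) = Fintype.card V := by
        rw [Nat.card_coe_set_eq, Set.ncard_univ, Nat.card_eq_fintype_card]
      rw [hc]
      ext x
      simp only [Set.mem_Iio, Set.mem_Icc]
      omega
    · set Sf : Finset V := Finset.univ.filter (fun u => ∃ k, p^[k] u = v) with hSf_def
      have hSf_mem : ∀ u : V, u ∈ Sf ↔ ∃ k, p^[k] u = v := by
        intro u
        rw [hSf_def, Finset.mem_filter]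
        simp
      have hvSf : v ∈ Sf := (hSf_mem v).mpr ⟨0, rfl⟩
      have hchar : ∀ u : V, (∃ k, p^[k] u = v) → u ≠ r ∧
          List.idxOf (p v, v) tour ≤ List.idxOf (p u, u) tour ∧
          List.idxOf (p u, u) tour < List.idxOf (v, p v) tour := by
        intro u hu
        have hur : u ≠ r := fun h => hv (hsub_r v (h ▸ hu))
        rcases eq_or_ne u v with huv | huv
        · subst huv
          exact ⟨hur, le_refl _, hEX u hur⟩
        · obtain ⟨k, hk⟩ := hu
          have hwE : etW r tour (List.idxOf (p u, u) tour + 1) = u := by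
            rw [hws, hdE u hur]
          have hm := (hA v hv (List.idxOf (p u, u) tour + 1)
            (by have := hElt u hur; omega)).mp ⟨k, by rw [hwE]; exact hk⟩
          have h1 := hm.1
          have h2 := hm.2
          exact ⟨hur, by omega, by omega⟩
      have hcardS : Sf.card = ((Finset.Ico (List.idxOf (p v, v) tour)
          (List.idxOf (v, p v) tour)).filter (etP p r tour)).card := by
        apply Finset.card_bij (fun u _ => List.idxOf (p u, u) tour)
        · intro u hu
          obtain ⟨hur, h1, h2⟩ := hchar u ((hSf_mem u).mp hu)
          simp only [Finset.mem_filter, Finset.mem_Ico]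
          exact ⟨⟨h1, h2⟩, hPE u hur⟩
        · intro u hu u' hu' h
          exact hE_inj u u' (hchar u ((hSf_mem u).mp hu)).1 (hchar u' ((hSf_mem u').mp hu')).1 h
        · intro i hi
          simp only [Finset.mem_filter, Finset.mem_Ico] at hi
          obtain ⟨⟨h1, h2⟩, hP⟩ := hi
          have hilen : i < tour.length := lt_trans h2 (hXlt v hv)
          obtain ⟨hbr, hbi⟩ := hfwd_pos i hilen hP
          refine ⟨(etD r tour i).2, ?_, hbi.symm⟩
          apply (hSf_mem _).mpr
          have hm := (hA v hv (i + 1) (by omega)).mpr ⟨by omega, by omega⟩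
          rw [hws] at hm
          exact hm
      have hFX : etF p r tour (List.idxOf (v, p v) tour)
          = etF p r tour (List.idxOf (p v, v) tour) + Sf.card := by
        have hle : List.idxOf (p v, v) tour ≤ List.idxOf (v, p v) tour :=
          le_of_lt (hEX v hv)
        have hsplit : etF p r tour (List.idxOf (p v, v) tour) +
            ∑ i ∈ Finset.Ico (List.idxOf (p v, v) tour) (List.idxOf (v, p v) tour),
              (if etP p r tour i then 1 else 0) = etF p r tour (List.idxOf (v, p v) tour) := by
          simp only [etF, Finset.range_eq_Ico]
          exact Finset.sum_Ico_consecutive _ (Nat.zero_le _) hle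
        have hmid : ∑ i ∈ Finset.Ico (List.idxOf (p v, v) tour) (List.idxOf (v, p v) tour),
            (if etP p r tour i then 1 else 0)
            = ((Finset.Ico (List.idxOf (p v, v) tour)
                (List.idxOf (v, p v) tour)).filter (etP p r tour)).card :=
          (Finset.card_filter _ _).symm
        rw [← hsplit, hmid, ← hcardS]
      have hS1 : 1 ≤ Sf.card := Finset.card_pos.mpr ⟨v, hvSf⟩
      have hPNv := hPNF v hv
      have hbound : ∀ u ∈ Sf, PN u ∈ Finset.Icc (PN v) (PN v + Sf.card - 1) := by
        intro u hu
        obtain ⟨hur, h1, h2⟩ := hchar u ((hSf_mem u).mp hu)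
        rw [Finset.mem_Icc, hPNF u hur, hPNv]
        constructor
        · have := hFmono (List.idxOf (p v, v) tour) (List.idxOf (p u, u) tour) h1
          omega
        · have ha : etF p r tour (List.idxOf (p u, u) tour + 1)
              ≤ etF p r tour (List.idxOf (v, p v) tour) := hFmono _ _ (by omega)
          have hb : etF p r tour (List.idxOf (p u, u) tour + 1)
              = etF p r tour (List.idxOf (p u, u) tour) + 1 := by
            rw [hFsucc, if_pos (hPE u hur)]
          omega
      have himg2 : Finset.image PN Sf = Finset.Icc (PN v) (PN v + Sf.card - 1) := by
        apply Finset.eq_of_subset_of_card_le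
        · intro x hx
          rw [Finset.mem_image] at hx
          obtain ⟨u, hu, hux⟩ := hx
          rw [← hux]
          exact hbound u hu
        · rw [Nat.card_Icc, Finset.card_image_of_injective _ hinj]
          omega
      have hNat : Nat.card {u : V | ∃ k, p^[k] u = v} = Sf.card := by
        rw [Nat.card_coe_set_eq, Set.ncard_eq_toFinset_card', Set.toFinset_setOf]
      have hset : {u : V | ∃ k, p^[k] u = v} = ↑Sf := by
        ext u
        simp only [Set.mem_setOf_eq, Finset.mem_coe]
        exact (hSf_mem u).symm
      rw [hNat, hset, ← Finset.coe_image, himg2, Finset.coe_Icc]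
  exact ⟨hinj, hrange, hanc, hsub⟩
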